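/- With g as in the Golay construction, the pair (Ψ(g+(q/2)x_{π(m−1)}), Ψ(g+(q/2)(x_{π(0)}+x_{π(m−1)})+c')) is a complementary mate of the GCP (Ψ(g), Ψ(g+(q/2)x_{π(0)}+c')), i.e., the sum of the two aperiodic cross-correlations C(Ψ(g),Ψ(g+(q/2)x_{π(m−1)}))(τ) + C(Ψ(g+(q/2)x_{π(0)}+c'),Ψ(g+(q/2)(x_{π(0)}+x_{π(m−1)})+c'))(τ) vanishes for every shift τ. -/

import Mathlib

open Finset Complex

/-- ω = exp(2πi/q). -/
noncomputable def omegaq (q : ℕ) : ℂ := Complex.exp (2 * Real.pi * Complex.I / q)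

/-- Aperiodic cross-correlation of two length-`N` complex sequences at shift `τ`. -/
noncomputable def acorr (N : ℕ) (x y : ℕ → ℂ) (τ : ℕ) : ℂ :=
  ∑ i ∈ Finset.range (N - τ), x i * (starRingEnd ℂ) (y (i + τ))

/-- `k`-th binary digit of `i`. -/
def bit (i k : ℕ) : ℕ := (i / 2 ^ k) % 2

namespace Stmt2Aux

lemma bit_lt_two (n k : ℕ) : bit n k < 2 := Nat.mod_lt _ (by norm_num)

lemma testBit_eq_bit (n k : ℕ) : n.testBit k = decide (bit n k = 1) :=
  Nat.testBit_eq_decide_div_mod_eq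

lemma decomp (n k : ℕ) :
    n = 2^(k+1) * (n / 2^(k+1)) + (n % 2^k + 2^k * bit n k) ∧ n % 2^k < 2^k := by
  have h1 := Nat.div_add_mod n (2^(k+1))
  have h2 : n % 2^(k+1) = n % 2^k + 2^k * bit n k := Nat.mod_pow_succ
  have h3 : n % 2^k < 2^k := Nat.mod_lt _ (by positivity)
  omega

lemma bit_high (n k m : ℕ) (hn : n < 2^m) (hk : m ≤ k) : bit n k = 0 := by
  have : n < 2^k := lt_of_lt_of_le hn (Nat.pow_le_pow_right (by norm_num) hk)
  simp [bit, Nat.div_eq_of_lt this]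

lemma eq_of_bits (a b m : ℕ) (ha : a < 2^m) (hb : b < 2^m)
    (h : ∀ k < m, bit a k = bit b k) : a = b := by
  apply Nat.eq_of_testBit_eq
  intro k
  rw [testBit_eq_bit, testBit_eq_bit]
  rcases lt_or_ge k m with hk | hk
  · rw [h k hk]
  · rw [bit_high a k m ha hk, bit_high b k m hb hk]

lemma bit_split_low (d s k j : ℕ) (hj : j ≤ k) :
    bit (2^(k+1) * d + s) j = bit s j := by
  unfold bit
  have e1 : 2^(k+1) = 2^j * 2^(k+1-j) := by rw [← pow_add]; congr 1; omega
  rw [e1, mul_assoc, Nat.mul_add_div (by positivity)]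
  have e2 : 2^(k+1-j) = 2 * 2^(k-j) := by rw [← pow_succ']; congr 1; omega
  rw [e2, mul_assoc]
  omega

lemma bit_split_high (d s k j : ℕ) (hs : s < 2^(k+1)) (hj : k < j) :
    bit (2^(k+1) * d + s) j = bit d (j-(k+1)) := by
  unfold bit
  have e1 : 2^j = 2^(k+1) * 2^(j-(k+1)) := by rw [← pow_add]; congr 1; omega
  rw [e1, ← Nat.div_div_eq_div_mul, Nat.mul_add_div (by positivity),
    Nat.div_eq_of_lt hs, Nat.add_zero]

lemma bit_add_pow_low (r k j : ℕ) (hj : j < k) : bit (r + 2^k) j = bit r j := by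
  unfold bit
  have e1 : 2^k = 2^(k-j) * 2^j := by rw [← pow_add]; congr 1; omega
  rw [e1, Nat.add_mul_div_right _ _ (by positivity : (0:ℕ) < 2^j)]
  have e2 : 2^(k-j) = 2 * 2^(k-j-1) := by rw [← pow_succ']; congr 1; omega
  omega

/-- if bit a k = 0 then (a + 2^k) has same bits except at k, where it is 1. -/
lemma bit_add_pow (a k : ℕ) (h : bit a k = 0) (j : ℕ) :
    bit (a + 2^k) j = if j = k then 1 else bit a j := by
  obtain ⟨hd, hr⟩ := decomp a k
  simp only [h, Nat.mul_zero, Nat.add_zero] at hd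
  set d := a / 2^(k+1) with hdd
  set r := a % 2^k with hrr
  have key : a + 2^k = 2^(k+1) * d + (r + 2^k) := by omega
  have hs : r + 2^k < 2^(k+1) := by
    have : 2^(k+1) = 2^k + 2^k := by ring
    omega
  rcases lt_trichotomy j k with hj | rfl | hj
  · rw [if_neg (Nat.ne_of_lt hj), key, bit_split_low _ _ _ _ (le_of_lt hj),
      bit_add_pow_low _ _ _ hj, hd, bit_split_low _ _ _ _ (le_of_lt hj)]
  · rw [if_pos rfl, key, bit_split_low _ _ _ _ le_rfl]
    unfold bit
    rw [Nat.add_div_right _ (by positivity), Nat.div_eq_of_lt hr]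
  · rw [if_neg (Nat.ne_of_gt hj), key, bit_split_high _ _ _ _ hs hj, hd,
      bit_split_high _ _ _ _ (by omega) hj]

/-- flip of bit k -/
def flip (a k : ℕ) : ℕ := if bit a k = 0 then a + 2^k else a - 2^k

lemma le_of_bit_one (a k : ℕ) (h : bit a k = 1) : 2^k ≤ a := by
  obtain ⟨hd, hr⟩ := decomp a k
  rw [h] at hd; omega

lemma bit_flip (a k j : ℕ) : bit (flip a k) j = if j = k then 1 - bit a j else bit a j := by
  unfold flip
  rcases (by have := bit_lt_two a k; omega : bit a k = 0 ∨ bit a k = 1) with h | h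
  · rw [if_pos h, bit_add_pow a k h j]
    rcases eq_or_ne j k with rfl | hj
    · simp [h]
    · simp [hj]
  · rw [if_neg (by omega)]
    have hle := le_of_bit_one a k h
    set b := a - 2^k with hb
    have hab : a = b + 2^k := by omega
    have hbk : bit b k = 0 := by
      obtain ⟨hd, hr⟩ := decomp a k
      rw [h, Nat.mul_one] at hd
      have hbd : b = 2^(k+1) * (a / 2^(k+1)) + (a % 2^k) := by omega
      rw [hbd, bit_split_low _ _ _ _ le_rfl]
      unfold bit
      rw [Nat.div_eq_of_lt hr]
    have := bit_add_pow b k hbk j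
    rw [← hab] at this
    rcases eq_or_ne j k with rfl | hj
    · simp only [eq_self_iff_true, if_true] at this ⊢; omega
    · simp only [if_neg hj] at this ⊢; rw [this]

lemma flip_ne (a k : ℕ) : flip a k ≠ a := by
  intro h
  have h1 := bit_flip a k k
  rw [h] at h1
  simp only [eq_self_iff_true, if_true] at h1
  have := bit_lt_two a k
  omega

lemma flip_flip (a k : ℕ) : flip (flip a k) k = a := by
  apply Nat.eq_of_testBit_eq
  intro j
  rw [testBit_eq_bit, testBit_eq_bit, bit_flip, bit_flip]
  rcases eq_or_ne j k with rfl | hj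
  · simp only [eq_self_iff_true, if_true]
    have h2 : 1 - (1 - bit a j) = bit a j := by have := bit_lt_two a j; omega
    rw [h2]
  · simp only [if_neg hj]

lemma flip_lt (a k m : ℕ) (ha : a < 2^m) (hk : k < m) : flip a k < 2^m := by
  unfold flip
  rcases (by have := bit_lt_two a k; omega : bit a k = 0 ∨ bit a k = 1) with h | h
  · rw [if_pos h]
    obtain ⟨hd, hr⟩ := decomp a k
    rw [h, Nat.mul_zero, Nat.add_zero] at hd
    -- a = 2^(k+1) d + r, r < 2^k; a + 2^k < 2^m
    by_contra hcon
    push_neg at hcon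
    -- bits of a + 2^k above m: bit (a+2^k) m... use bit_high contradiction? use: a+2^k has bit j = bit a j for j ≥ m ≠ k... all 0
    have h1 : ∀ j, bit (a + 2^k) j = if j = k then 1 else bit a j := bit_add_pow a k h
    have hkm : 2^k < 2^m := Nat.pow_lt_pow_right (by norm_num) hk
    have h3 : bit (a + 2^k) m = 1 := by
      unfold bit
      have l2 : (a + 2^k) / 2^m = 1 := by
        apply Nat.div_eq_of_lt_le
        · simpa using hcon
        · have : (1+1) * 2^m = 2^m + 2^m := by ring
          omega
      rw [l2]
    rw [h1 m] at h3
    have : m ≠ k := by omega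
    rw [if_neg this] at h3
    rw [bit_high a m m ha le_rfl] at h3
    exact absurd h3 (by norm_num)
  · rw [if_neg (by omega)]
    exact lt_of_le_of_lt (Nat.sub_le a (2^k)) ha

/-- flip commutes with adding τ when the flipped bit agrees -/
lemma flip_add (i τ k : ℕ) (h : bit i k = bit (i + τ) k) :
    flip i k + τ = flip (i + τ) k := by
  unfold flip
  rcases (by have := bit_lt_two i k; omega : bit i k = 0 ∨ bit i k = 1) with h0 | h1
  · rw [if_pos h0, if_pos (h ▸ h0)]; omega
  · rw [if_neg (by omega), if_neg (by rw [← h]; omega)]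
    have := le_of_bit_one i k h1
    omega

lemma omegaq_ne_zero (q : ℕ) : omegaq q ≠ 0 := Complex.exp_ne_zero _

lemma omegaq_half (q : ℕ) (hq : 2 ≤ q) (hq2 : 2 ∣ q) : omegaq q ^ (q / 2) = -1 := by
  obtain ⟨t, rfl⟩ := hq2
  have ht : (t : ℂ) ≠ 0 := by
    have : 1 ≤ t := by omega
    exact_mod_cast Nat.cast_ne_zero.mpr (by omega)
  rw [show 2 * t / 2 = t from by omega, omegaq, ← Complex.exp_nat_mul]
  rw [show (t : ℂ) * (2 * ↑Real.pi * I / ↑(2 * t)) = Real.pi * I from by push_cast; field_simp]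
  exact Complex.exp_pi_mul_I

lemma omegaq_conj (q : ℕ) (n : ℤ) :
    (starRingEnd ℂ) (omegaq q ^ n) = omegaq q ^ (-n) := by
  have h1 : (starRingEnd ℂ) (omegaq q) = (omegaq q)⁻¹ := by
    rw [omegaq, ← Complex.exp_conj, ← Complex.exp_neg]
    congr 1
    simp only [map_div₀, map_mul, Complex.conj_I, Complex.conj_ofNat, Complex.conj_natCast,
      Complex.conj_ofReal]
    ring
  rw [map_zpow₀, h1, inv_zpow, ← zpow_neg]

lemma omegaq_zhalf (q : ℕ) (hq : 2 ≤ q) (hq2 : 2 ∣ q) : omegaq q ^ ((q / 2 : ℕ) : ℤ) = -1 := by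
  rw [zpow_natCast, omegaq_half q hq hq2]

lemma omegaq_zhalf_neg (q : ℕ) (hq : 2 ≤ q) (hq2 : 2 ∣ q) :
    omegaq q ^ (-((q / 2 : ℕ) : ℤ)) = -1 := by
  rw [zpow_neg, omegaq_zhalf q hq hq2]
  norm_num

lemma omegaq_mul_bit (q : ℕ) (hq : 2 ≤ q) (hq2 : 2 ∣ q) (b : ℕ) (hb : b < 2) :
    omegaq q ^ (((q / 2 : ℕ) : ℤ) * b) = (-1 : ℂ) ^ b := by
  interval_cases b
  · simp
  · simpa using omegaq_zhalf q hq hq2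

lemma omegaq_mul_bit_neg (q : ℕ) (hq : 2 ≤ q) (hq2 : 2 ∣ q) (b : ℕ) (hb : b < 2) :
    omegaq q ^ (-(((q / 2 : ℕ) : ℤ) * b)) = (-1 : ℂ) ^ b := by
  rw [zpow_neg, omegaq_mul_bit q hq hq2 b hb]
  rcases (by omega : b = 0 ∨ b = 1) with rfl | rfl <;> norm_num


end Stmt2Aux
namespace Stmt2Aux

lemma bracket_ne (b1 b2 : ℕ) (h1 : b1 < 2) (h2 : b2 < 2) (hne : b1 ≠ b2) :
    (1 + (-1:ℂ)^b1 * (-1:ℂ)^b2) = 0 := by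
  rcases (by omega : b1 = 0 ∧ b2 = 1 ∨ b1 = 1 ∧ b2 = 0) with ⟨e1,e2⟩|⟨e1,e2⟩ <;>
    subst e1 <;> subst e2 <;> norm_num

lemma bracket_eq (b1 b2 : ℕ) (heq : b1 = b2) :
    (1 + (-1:ℂ)^b1 * (-1:ℂ)^b2) = 2 := by
  subst heq
  rw [← pow_add, show b1 + b1 = 2*b1 from by ring, pow_mul]
  norm_num

lemma neg_one_flip (b : ℕ) (hb : b < 2) : (-1:ℂ)^b + (-1:ℂ)^(1-b) = 0 := by
  interval_cases b <;> norm_num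

lemma sumL (m : ℕ) (cc : ℕ → ℕ) (i i' k : ℕ) (hk : k < m)
    (hbits : ∀ k', k' ≠ k → bit i' k' = bit i k') :
    (∑ u ∈ Finset.range m, (cc u : ℤ) * bit i' u) - ∑ u ∈ Finset.range m, (cc u : ℤ) * bit i u
      = (cc k : ℤ) * ((bit i' k : ℤ) - bit i k) := by
  rw [← Finset.sum_sub_distrib, Finset.sum_eq_single_of_mem k (Finset.mem_range.mpr hk)]
  · ring
  · intro u hu hne
    rw [hbits u hne]
    ring

lemma sumQ (m : ℕ) (π : ℕ → ℕ) (hm : 2 ≤ m)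
    (hinj : ∀ u u', u < m → u' < m → π u = π u' → u = u')
    (v : ℕ) (hv1 : 1 ≤ v) (hvm : v < m) (i i' : ℕ)
    (hbits : ∀ k', k' ≠ π (v-1) → bit i' k' = bit i k') :
    (∑ u ∈ Finset.range (m-1), (bit i' (π u) : ℤ) * bit i' (π (u+1)))
      - ∑ u ∈ Finset.range (m-1), (bit i (π u) : ℤ) * bit i (π (u+1))
      = ((bit i' (π (v-1)) : ℤ) - bit i (π (v-1)))
        * ((bit i (π v) : ℤ) + (if 2 ≤ v then (bit i (π (v-2)) : ℤ) else 0)) := by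
  rw [← Finset.sum_sub_distrib]
  rcases lt_or_ge v 2 with hv2 | hv2
  · -- v = 1
    have hv : v = 1 := by omega
    subst hv
    simp only [show (1:ℕ)-1 = 0 from rfl]
    rw [if_neg (by omega), Finset.sum_eq_single_of_mem 0 (Finset.mem_range.mpr (by omega))]
    · simp only [zero_add]
      rw [hbits (π 1) (fun h => by have := hinj 1 0 (by omega) (by omega) h; omega)]
      ring
    · intro u hu hne
      have hu' : u < m - 1 := Finset.mem_range.mp hu
      rw [hbits (π u) (fun h => hne (hinj u 0 (by omega) (by omega) h)),
        hbits (π (u+1)) (fun h => by have := hinj (u+1) 0 (by omega) (by omega) h; omega)]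
      ring
  · -- v ≥ 2
    rw [if_pos hv2]
    have hsub : ({v-2, v-1} : Finset ℕ) ⊆ Finset.range (m-1) := by
      intro x hx
      simp only [Finset.mem_insert, Finset.mem_singleton] at hx
      rcases hx with rfl | rfl <;> exact Finset.mem_range.mpr (by omega)
    rw [← Finset.sum_subset hsub ?_]
    · rw [Finset.sum_pair (by omega : v-2 ≠ v-1)]
      have e1 : v - 2 + 1 = v - 1 := by omega
      have e2 : v - 1 + 1 = v := by omega
      rw [e1, e2,
        hbits (π (v-2)) (fun h => by have := hinj (v-2) (v-1) (by omega) (by omega) h; omega),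
        hbits (π v) (fun h => by have := hinj v (v-1) (by omega) (by omega) h; omega)]
      ring
    · intro u hu hnu
      simp only [Finset.mem_insert, Finset.mem_singleton, not_or] at hnu
      have hu' : u < m - 1 := Finset.mem_range.mp hu
      rw [hbits (π u) (fun h => hnu.2 (hinj u (v-1) (by omega) (by omega) h)),
        hbits (π (u+1)) (fun h => hnu.1 (by have := hinj (u+1) (v-1) (by omega) (by omega) h; omega))]
      ring

end Stmt2Aux
namespace Stmt2Aux

lemma expD (q m : ℕ) (π cc : ℕ → ℕ) (c : ℕ) (g : ℕ → ℕ) (hm : 2 ≤ m)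
    (hinj : ∀ u u', u < m → u' < m → π u = π u' → u = u')
    (hπm : ∀ u, u < m → π u < m)
    (hg : ∀ i, g i = q / 2 * ∑ k ∈ Finset.range (m - 1), bit i (π k) * bit i (π (k + 1))
        + ∑ k ∈ Finset.range m, cc k * bit i k + c)
    (τ i v : ℕ) (hv1 : 1 ≤ v) (hvm : v < m)
    (hmin : ∀ u, u < v → bit i (π u) = bit (i+τ) (π u))
    (hdif : bit i (π v) ≠ bit (i+τ) (π v)) :
    ((g (flip i (π (v-1))) : ℤ) - g (flip (i+τ) (π (v-1)))) - ((g i : ℤ) - g (i+τ))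
      = ((q/2 : ℕ) : ℤ) ∨
    ((g (flip i (π (v-1))) : ℤ) - g (flip (i+τ) (π (v-1)))) - ((g i : ℤ) - g (i+τ))
      = -((q/2 : ℕ) : ℤ) := by
  set k := π (v-1) with hkdef
  set j := i + τ with hjdef
  set i' := flip i k with hi'def
  set j' := flip j k with hj'def
  have hkm : k < m := hπm _ (by omega)
  have hbi : ∀ k', k' ≠ k → bit i' k' = bit i k' := by
    intro k' h
    rw [hi'def, bit_flip, if_neg h]
  have hbj : ∀ k', k' ≠ k → bit j' k' = bit j k' := by
    intro k' h
    rw [hj'def, bit_flip, if_neg h]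
  have hQi := sumQ m π hm hinj v hv1 hvm i i' hbi
  have hQj := sumQ m π hm hinj v hv1 hvm j j' hbj
  have hLi := sumL m cc i i' k hkm hbi
  have hLj := sumL m cc j j' k hkm hbj
  have hflipk_i : bit i' k = 1 - bit i k := by rw [hi'def, bit_flip, if_pos rfl]
  have hflipk_j : bit j' k = 1 - bit j k := by rw [hj'def, bit_flip, if_pos rfl]
  have hik : bit i k = bit j k := hmin (v-1) (by omega)
  have hδ : (bit i' k : ℤ) - bit i k = (bit j' k : ℤ) - bit j k := by
    rw [hflipk_i, hflipk_j, hik]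
  have hX : (if 2 ≤ v then (bit i (π (v-2)) : ℤ) else 0)
      = (if 2 ≤ v then (bit j (π (v-2)) : ℤ) else 0) := by
    rcases le_or_gt 2 v with h2 | h2
    · rw [if_pos h2, if_pos h2, hmin (v-2) (by omega)]
    · rw [if_neg (by omega), if_neg (by omega)]
  have hgz : ∀ n, (g n : ℤ)
      = ((q/2 : ℕ) : ℤ) * (∑ u ∈ Finset.range (m-1), (bit n (π u) : ℤ) * bit n (π (u+1)))
        + (∑ u ∈ Finset.range m, (cc u : ℤ) * bit n u) + c := by
    intro n
    rw [hg n]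
    push_cast
    ring
  have hD : ((g i' : ℤ) - g j') - ((g i : ℤ) - g j)
      = ((q/2 : ℕ) : ℤ) * (((bit i' k : ℤ) - bit i k) * ((bit i (π v) : ℤ) - (bit j (π v)))) := by
    rw [hgz i', hgz j', hgz i, hgz j]
    linear_combination (((q/2 : ℕ) : ℤ)) * hQi - (((q/2 : ℕ) : ℤ)) * hQj + hLi - hLj
      + ((((q/2 : ℕ) : ℤ)) * ((bit j (π v) : ℤ)
          + (if 2 ≤ v then (bit j (π (v-2)) : ℤ) else 0)) + (cc k : ℤ)) * hδ
      + ((((q/2 : ℕ) : ℤ)) * ((bit i' k : ℤ) - bit i k)) * hX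
  have ha := bit_lt_two i k
  have hb1 := bit_lt_two i (π v)
  have hb2 := bit_lt_two j (π v)
  rw [hD, hflipk_i]
  have hcast : ((1 - bit i k : ℕ) : ℤ) = 1 - (bit i k : ℤ) := by omega
  rw [hcast]
  rcases (by omega : bit i k = 0 ∨ bit i k = 1) with h0 | h0 <;>
    rcases (by omega : bit i (π v) = 0 ∧ bit j (π v) = 1 ∨ bit i (π v) = 1 ∧ bit j (π v) = 0)
      with ⟨e1, e2⟩ | ⟨e1, e2⟩ <;>
    rw [h0, e1, e2] <;> norm_num

end Stmt2Aux
namespace Stmt2Aux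

lemma find_facts (m : ℕ) (π : ℕ → ℕ) (τ a : ℕ)
    (hex : ∃ u, u < m ∧ bit a (π u) ≠ bit (a+τ) (π u))
    (hbr : bit a (π 0) = bit (a+τ) (π 0)) :
    1 ≤ Nat.find hex ∧ Nat.find hex < m ∧
    bit a (π (Nat.find hex)) ≠ bit (a+τ) (π (Nat.find hex)) ∧
    ∀ u, u < Nat.find hex → bit a (π u) = bit (a+τ) (π u) := by
  have hspec := Nat.find_spec hex
  have key : ∀ u, u < Nat.find hex → bit a (π u) = bit (a+τ) (π u) := by
    intro u hu
    have h := Nat.find_min hex hu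
    by_contra hne
    exact h ⟨lt_trans hu hspec.1, hne⟩
  refine ⟨?_, hspec.1, hspec.2, key⟩
  by_contra hcon
  push_neg at hcon
  have h0 : Nat.find hex = 0 := by omega
  rw [h0] at hspec
  exact hspec.2 hbr

lemma no_hex_facts (m : ℕ) (π : ℕ → ℕ) (τ a : ℕ) (hm : 2 ≤ m)
    (hsurj : ∀ k, k < m → ∃ u, u < m ∧ π u = k)
    (ha : a < 2^m - τ)
    (h : ¬ ∃ u, u < m ∧ bit a (π u) ≠ bit (a+τ) (π u)) : τ = 0 := by
  push_neg at h
  have h2m : a < 2^m ∧ a + τ < 2^m := by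
    have : (0:ℕ) < 2^m - τ := by omega
    omega
  have hbits : ∀ k, k < m → bit a k = bit (a+τ) k := by
    intro kk hk
    obtain ⟨u, hu, rfl⟩ := hsurj kk hk
    exact h u hu
  have := eq_of_bits a (a+τ) m h2m.1 h2m.2 hbits
  omega

/-- Main pairing facts, for `a` in range with equal π0-bits and a differing bit. -/
lemma pairP (m : ℕ) (π : ℕ → ℕ) (hm : 2 ≤ m)
    (hinj : ∀ u u', u < m → u' < m → π u = π u' → u = u')
    (hπm : ∀ u, u < m → π u < m)
    (τ a : ℕ) (ha : a < 2^m - τ)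
    (hbr : bit a (π 0) = bit (a+τ) (π 0))
    (hex : ∃ u, u < m ∧ bit a (π u) ≠ bit (a+τ) (π u)) :
    flip a (π (Nat.find hex - 1)) + τ = flip (a+τ) (π (Nat.find hex - 1)) ∧
    flip a (π (Nat.find hex - 1)) < 2^m - τ ∧
    bit (flip a (π (Nat.find hex - 1))) (π 0)
      = bit (flip a (π (Nat.find hex - 1)) + τ) (π 0) ∧
    (∃ u, u < m ∧ bit (flip a (π (Nat.find hex - 1))) (π u)
        ≠ bit (flip a (π (Nat.find hex - 1)) + τ) (π u)) ∧
    (∀ hex' : ∃ u, u < m ∧ bit (flip a (π (Nat.find hex - 1))) (π u)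
        ≠ bit (flip a (π (Nat.find hex - 1)) + τ) (π u), Nat.find hex' = Nat.find hex) := by
  obtain ⟨hv1, hvm, hdif, hmin⟩ := find_facts m π τ a hex hbr
  set v := Nat.find hex with hvdef
  set k := π (v-1) with hkdef
  have hkm : k < m := hπm _ (by omega)
  have hbitk : bit a k = bit (a+τ) k := hmin (v-1) (by omega)
  have hM1 : flip a k + τ = flip (a+τ) k := flip_add a τ k hbitk
  have h2m : a < 2^m ∧ a + τ < 2^m := by
    have : (0:ℕ) < 2^m - τ := by omega
    omega
  have hM2 : flip a k < 2^m - τ := by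
    have := flip_lt (a+τ) k m h2m.2 hkm
    rw [← hM1] at this
    omega
  -- bits of the flipped pair
  have hba : ∀ k', bit (flip a k) k' = if k' = k then 1 - bit a k' else bit a k' :=
    fun k' => bit_flip a k k'
  have hbj : ∀ k', bit (flip a k + τ) k' = if k' = k then 1 - bit (a+τ) k' else bit (a+τ) k' := by
    intro k'
    rw [hM1]
    exact bit_flip (a+τ) k k'
  have hM3 : bit (flip a k) (π 0) = bit (flip a k + τ) (π 0) := by
    rw [hba, hbj]
    rcases eq_or_ne (π 0) k with he | he
    · rw [if_pos he, if_pos he, hbr]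
    · rw [if_neg he, if_neg he, hbr]
  have hπvk : π v ≠ k := by
    intro h
    have := hinj v (v-1) (by omega) (by omega) h
    omega
  have hM4 : ∃ u, u < m ∧ bit (flip a k) (π u) ≠ bit (flip a k + τ) (π u) := by
    refine ⟨v, by omega, ?_⟩
    rw [hba, hbj, if_neg hπvk, if_neg hπvk]
    exact hdif
  refine ⟨hM1, hM2, hM3, hM4, ?_⟩
  intro hex'
  rw [Nat.find_eq_iff]
  constructor
  · refine ⟨by omega, ?_⟩
    rw [hba, hbj, if_neg hπvk, if_neg hπvk]
    exact hdif
  · intro u hu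
    rintro ⟨hum, hne⟩
    apply hne
    rw [hba, hbj]
    rcases eq_or_ne (π u) k with he | he
    · rw [if_pos he, if_pos he, hmin u (by omega)]
    · rw [if_neg he, if_neg he, hmin u (by omega)]

end Stmt2Aux
namespace Stmt2Aux

lemma core (q m : ℕ) (hq : 2 ≤ q) (hq2 : 2 ∣ q) (hm : 2 ≤ m)
    (π : ℕ → ℕ) (hπ : Set.BijOn π (Set.Iio m) (Set.Iio m))
    (c : ℕ) (cc : ℕ → ℕ) (g : ℕ → ℕ)
    (hg : ∀ i, g i = q / 2 * ∑ k ∈ Finset.range (m - 1), bit i (π k) * bit i (π (k + 1))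
        + ∑ k ∈ Finset.range m, cc k * bit i k + c)
    (w : Bool) (τ : ℕ) :
    ∑ i ∈ Finset.range (2^m - τ),
      omegaq q ^ ((g i : ℤ) - g (i + τ))
        * (-1 : ℂ) ^ bit (cond w i (i + τ)) (π (m-1))
        * (1 + (-1:ℂ) ^ bit i (π 0) * (-1:ℂ) ^ bit (i+τ) (π 0)) = 0 := by
  have hπm : ∀ u, u < m → π u < m := fun u hu => Set.mem_Iio.mp (hπ.mapsTo (Set.mem_Iio.mpr hu))
  have hinj : ∀ u u', u < m → u' < m → π u = π u' → u = u' := fun u u' hu hu' h =>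
    hπ.injOn (Set.mem_Iio.mpr hu) (Set.mem_Iio.mpr hu') h
  have hsurj : ∀ k, k < m → ∃ u, u < m ∧ π u = k := by
    intro kk hk
    obtain ⟨u, hu, he⟩ := hπ.surjOn (Set.mem_Iio.mpr hk)
    exact ⟨u, Set.mem_Iio.mp hu, he⟩
  apply Finset.sum_involution
    (fun a _ => if bit a (π 0) = bit (a+τ) (π 0) then
       (if hex : ∃ u, u < m ∧ bit a (π u) ≠ bit (a+τ) (π u)
        then flip a (π (Nat.find hex - 1)) else flip a (π (m-1))) else a)
  -- obligation h : f a + f (G a) = 0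
  · intro a ha
    have ham := Finset.mem_range.mp ha
    by_cases hbr : bit a (π 0) = bit (a+τ) (π 0)
    · rw [if_pos hbr]
      by_cases hex : ∃ u, u < m ∧ bit a (π u) ≠ bit (a+τ) (π u)
      · rw [dif_pos hex]
        obtain ⟨hM1, hM2, hM3, hM4, hM5⟩ := pairP m π hm hinj hπm τ a ham hbr hex
        obtain ⟨hv1, hvm, hdif, hmin⟩ := find_facts m π τ a hex hbr
        have hBa : (1 + (-1:ℂ)^bit a (π 0) * (-1:ℂ)^bit (a+τ) (π 0)) = 2 := bracket_eq _ _ hbr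
        have hBa' : (1 + (-1:ℂ)^bit (flip a (π (Nat.find hex - 1))) (π 0)
            * (-1:ℂ)^bit (flip a (π (Nat.find hex - 1)) + τ) (π 0)) = 2 := bracket_eq _ _ hM3
        have hpk : π (m-1) ≠ π (Nat.find hex - 1) := fun h => by
          have := hinj (m-1) (Nat.find hex - 1) (by omega) (by omega) h
          omega
        have hS1 : bit (flip a (π (Nat.find hex - 1))) (π (m-1)) = bit a (π (m-1)) := by
          rw [bit_flip, if_neg hpk]
        have hS2 : bit (flip a (π (Nat.find hex - 1)) + τ) (π (m-1)) = bit (a+τ) (π (m-1)) := by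
          rw [hM1, bit_flip, if_neg hpk]
        have hSeq : bit (cond w (flip a (π (Nat.find hex - 1)))
              (flip a (π (Nat.find hex - 1)) + τ)) (π (m-1))
            = bit (cond w a (a+τ)) (π (m-1)) := by
          cases w
          · exact hS2
          · exact hS1
        have hkey : omegaq q ^ ((g (flip a (π (Nat.find hex - 1))) : ℤ)
              - g (flip a (π (Nat.find hex - 1)) + τ))
            = -(omegaq q ^ ((g a : ℤ) - g (a+τ))) := by
          rw [hM1]
          rcases expD q m π cc c g hm hinj hπm hg τ a (Nat.find hex) hv1 hvm hmin hdif
            with hd | hd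
          · have he : (g (flip a (π (Nat.find hex - 1))) : ℤ) - g (flip (a+τ) (π (Nat.find hex - 1)))
                = ((g a : ℤ) - g (a+τ)) + ((q/2 : ℕ) : ℤ) := by omega
            rw [he, zpow_add₀ (omegaq_ne_zero q), omegaq_zhalf q hq hq2]
            ring
          · have he : (g (flip a (π (Nat.find hex - 1))) : ℤ) - g (flip (a+τ) (π (Nat.find hex - 1)))
                = ((g a : ℤ) - g (a+τ)) + (-((q/2 : ℕ) : ℤ)) := by omega
            rw [he, zpow_add₀ (omegaq_ne_zero q), omegaq_zhalf_neg q hq hq2]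
            ring
        rw [hBa, hBa', hSeq, hkey]
        ring
      · rw [dif_neg hex]
        have hτ : τ = 0 := no_hex_facts m π τ a hm hsurj ham hex
        subst hτ
        simp only [Nat.add_zero, Bool.cond_self]
        have hBa : (1 + (-1:ℂ)^bit a (π 0) * (-1:ℂ)^bit a (π 0)) = 2 := bracket_eq _ _ rfl
        have hBa' : (1 + (-1:ℂ)^bit (flip a (π (m-1))) (π 0)
            * (-1:ℂ)^bit (flip a (π (m-1))) (π 0)) = 2 := bracket_eq _ _ rfl
        have hfb : bit (flip a (π (m-1))) (π (m-1)) = 1 - bit a (π (m-1)) := by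
          rw [bit_flip, if_pos rfl]
        have hz : (g a : ℤ) - g a = 0 := sub_self _
        have hz' : (g (flip a (π (m-1))) : ℤ) - g (flip a (π (m-1))) = 0 := sub_self _
        rw [hBa, hBa', hfb, hz, hz', zpow_zero]
        have := neg_one_flip (bit a (π (m-1))) (bit_lt_two a (π (m-1)))
        linear_combination 2 * this
    · rw [if_neg hbr]
      have hz := bracket_ne _ _ (bit_lt_two a (π 0)) (bit_lt_two (a+τ) (π 0)) hbr
      rw [hz]
      ring
  -- obligation g_ne
  · intro a ha hf
    by_cases hbr : bit a (π 0) = bit (a+τ) (π 0)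
    · rw [if_pos hbr]
      by_cases hex : ∃ u, u < m ∧ bit a (π u) ≠ bit (a+τ) (π u)
      · rw [dif_pos hex]
        exact flip_ne _ _
      · rw [dif_neg hex]
        exact flip_ne _ _
    · exfalso
      apply hf
      rw [bracket_ne _ _ (bit_lt_two a (π 0)) (bit_lt_two (a+τ) (π 0)) hbr]
      ring
  -- obligation g_mem
  · intro a ha
    have ham := Finset.mem_range.mp ha
    by_cases hbr : bit a (π 0) = bit (a+τ) (π 0)
    · rw [if_pos hbr]
      by_cases hex : ∃ u, u < m ∧ bit a (π u) ≠ bit (a+τ) (π u)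
      · rw [dif_pos hex]
        exact Finset.mem_range.mpr (pairP m π hm hinj hπm τ a ham hbr hex).2.1
      · rw [dif_neg hex]
        have hτ : τ = 0 := no_hex_facts m π τ a hm hsurj ham hex
        subst hτ
        refine Finset.mem_range.mpr ?_
        have := flip_lt a (π (m-1)) m (by omega) (hπm (m-1) (by omega))
        omega
    · rw [if_neg hbr]
      exact ha
  -- obligation g_inv
  · intro a ha
    have ham := Finset.mem_range.mp ha
    by_cases hbr : bit a (π 0) = bit (a+τ) (π 0)
    · by_cases hex : ∃ u, u < m ∧ bit a (π u) ≠ bit (a+τ) (π u)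
      · obtain ⟨hM1, hM2, hM3, hM4, hM5⟩ := pairP m π hm hinj hπm τ a ham hbr hex
        simp only [if_pos hbr, dif_pos hex]
        rw [if_pos hM3, dif_pos hM4, hM5 hM4, flip_flip]
      · have hτ : τ = 0 := no_hex_facts m π τ a hm hsurj ham hex
        subst hτ
        simp only [Nat.add_zero] at hbr hex ⊢
        simp only [if_pos hbr, dif_neg hex]
        have hex' : ¬ ∃ u, u < m ∧ bit (flip a (π (m-1))) (π u) ≠ bit (flip a (π (m-1))) (π u) := by
          push_neg
          intro u hu
          rfl
        rw [dif_neg hex', flip_flip]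
    · simp only [if_neg hbr]

end Stmt2Aux
namespace Stmt2Aux

lemma pow_to_zpow (q : ℕ) (n : ℕ) : omegaq q ^ n = omegaq q ^ ((n : ℕ) : ℤ) :=
  (zpow_natCast _ n).symm

lemma conj_pow (q : ℕ) (n : ℕ) :
    (starRingEnd ℂ) (omegaq q ^ n) = omegaq q ^ (-((n : ℕ) : ℤ)) := by
  rw [pow_to_zpow, omegaq_conj]

lemma prod1 (q : ℕ) (hq : 2 ≤ q) (hq2 : 2 ∣ q) (x y b : ℕ) (hb : b < 2) :
    omegaq q ^ x * (starRingEnd ℂ) (omegaq q ^ (y + q/2 * b))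
      = omegaq q ^ ((x:ℤ) - y) * (-1:ℂ)^b := by
  rw [conj_pow, pow_to_zpow, ← zpow_add₀ (omegaq_ne_zero q)]
  have e : ((x:ℕ):ℤ) + -(((y + q/2*b : ℕ) : ℕ) : ℤ)
      = ((x:ℤ) - y) + (-(((q/2:ℕ):ℤ) * b)) := by push_cast; ring
  rw [e, zpow_add₀ (omegaq_ne_zero q), omegaq_mul_bit_neg q hq hq2 b hb]

lemma prod2 (q : ℕ) (hq : 2 ≤ q) (hq2 : 2 ∣ q) (x y b1 b2 b3 d : ℕ)
    (hb1 : b1 < 2) (hb2 : b2 < 2) (hb3 : b3 < 2) :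
    omegaq q ^ (x + q/2 * b1 + d) * (starRingEnd ℂ) (omegaq q ^ (y + q/2 * (b2 + b3) + d))
      = omegaq q ^ ((x:ℤ) - y) * (-1:ℂ)^b1 * (-1:ℂ)^b2 * (-1:ℂ)^b3 := by
  rw [conj_pow, pow_to_zpow, ← zpow_add₀ (omegaq_ne_zero q)]
  have e : (((x + q/2*b1 + d : ℕ):ℕ):ℤ) + -((((y + q/2*(b2+b3) + d : ℕ)):ℤ))
      = (((x:ℤ) - y) + (((q/2:ℕ):ℤ) * b1)) + (-(((q/2:ℕ):ℤ) * b2)) + (-(((q/2:ℕ):ℤ) * b3)) := by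
    push_cast; ring
  rw [e, zpow_add₀ (omegaq_ne_zero q), zpow_add₀ (omegaq_ne_zero q),
    zpow_add₀ (omegaq_ne_zero q), omegaq_mul_bit q hq hq2 b1 hb1,
    omegaq_mul_bit_neg q hq hq2 b2 hb2, omegaq_mul_bit_neg q hq hq2 b3 hb3]

lemma prod3 (q : ℕ) (hq : 2 ≤ q) (hq2 : 2 ∣ q) (x y b : ℕ) (hb : b < 2) :
    omegaq q ^ (x + q/2 * b) * (starRingEnd ℂ) (omegaq q ^ y)
      = omegaq q ^ ((x:ℤ) - y) * (-1:ℂ)^b := by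
  rw [conj_pow, pow_to_zpow, ← zpow_add₀ (omegaq_ne_zero q)]
  have e : (((x + q/2*b : ℕ):ℕ):ℤ) + -(((y:ℕ):ℤ))
      = ((x:ℤ) - y) + (((q/2:ℕ):ℤ) * b) := by push_cast; ring
  rw [e, zpow_add₀ (omegaq_ne_zero q), omegaq_mul_bit q hq hq2 b hb]

lemma prod4 (q : ℕ) (hq : 2 ≤ q) (hq2 : 2 ∣ q) (x y b1 b2 b3 d : ℕ)
    (hb1 : b1 < 2) (hb2 : b2 < 2) (hb3 : b3 < 2) :
    omegaq q ^ (x + q/2 * (b1 + b3) + d) * (starRingEnd ℂ) (omegaq q ^ (y + q/2 * b2 + d))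
      = omegaq q ^ ((x:ℤ) - y) * (-1:ℂ)^b1 * (-1:ℂ)^b3 * (-1:ℂ)^b2 := by
  rw [conj_pow, pow_to_zpow, ← zpow_add₀ (omegaq_ne_zero q)]
  have e : (((x + q/2*(b1+b3) + d : ℕ):ℕ):ℤ) + -((((y + q/2*b2 + d : ℕ)):ℤ))
      = ((((x:ℤ) - y) + (((q/2:ℕ):ℤ) * b1)) + (((q/2:ℕ):ℤ) * b3)) + (-(((q/2:ℕ):ℤ) * b2)) := by
    push_cast; ring
  rw [e, zpow_add₀ (omegaq_ne_zero q), zpow_add₀ (omegaq_ne_zero q),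
    zpow_add₀ (omegaq_ne_zero q), omegaq_mul_bit q hq hq2 b1 hb1,
    omegaq_mul_bit q hq hq2 b3 hb3, omegaq_mul_bit_neg q hq hq2 b2 hb2]

end Stmt2Aux

open Stmt2Aux


/-- the pair (Ψ(g+(q/2)x_{π(m−1)}), Ψ(g+(q/2)(x_{π(0)}+x_{π(m−1)})+c')) is a
complementary mate of the GCP (Ψ(g), Ψ(g+(q/2)x_{π(0)}+c')): the sum of cross-correlations
vanishes at every shift. -/
theorem stmt_2 (q m : ℕ) (hq : 2 ≤ q) (hq2 : 2 ∣ q) (hm : 2 ≤ m)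
    (π : ℕ → ℕ) (hπ : Set.BijOn π (Set.Iio m) (Set.Iio m))
    (c c' : ℕ) (cc : ℕ → ℕ)
    (g : ℕ → ℕ)
    (hg : ∀ i, g i = q / 2 * ∑ k ∈ Finset.range (m - 1), bit i (π k) * bit i (π (k + 1))
        + ∑ k ∈ Finset.range m, cc k * bit i k + c)
    (a b cs ds : ℕ → ℂ)
    (ha : ∀ i, a i = omegaq q ^ g i)
    (hb : ∀ i, b i = omegaq q ^ (g i + q / 2 * bit i (π 0) + c'))
    (hcs : ∀ i, cs i = omegaq q ^ (g i + q / 2 * bit i (π (m - 1))))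
    (hds : ∀ i, ds i = omegaq q ^ (g i + q / 2 * (bit i (π 0) + bit i (π (m - 1))) + c')) :
    ∀ τ : ℕ,
      acorr (2 ^ m) a cs τ + acorr (2 ^ m) b ds τ = 0 ∧
      acorr (2 ^ m) cs a τ + acorr (2 ^ m) ds b τ = 0 := by
  intro τ
  constructor
  · have hcore := core q m hq hq2 hm π hπ c cc g hg false τ
    rw [acorr, acorr, ← Finset.sum_add_distrib]
    refine Eq.trans (Finset.sum_congr rfl ?_) hcore
    intro i hi
    rw [ha i, hcs (i+τ), hb i, hds (i+τ),
      prod1 q hq hq2 (g i) (g (i+τ)) _ (bit_lt_two _ _),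
      prod2 q hq hq2 (g i) (g (i+τ)) _ _ _ c' (bit_lt_two _ _) (bit_lt_two _ _) (bit_lt_two _ _)]
    simp only [Bool.cond_false]
    ring
  · have hcore := core q m hq hq2 hm π hπ c cc g hg true τ
    rw [acorr, acorr, ← Finset.sum_add_distrib]
    refine Eq.trans (Finset.sum_congr rfl ?_) hcore
    intro i hi
    rw [hcs i, ha (i+τ), hds i, hb (i+τ),
      prod3 q hq hq2 (g i) (g (i+τ)) _ (bit_lt_two _ _),
      prod4 q hq hq2 (g i) (g (i+τ)) _ _ _ c' (bit_lt_two _ _) (bit_lt_two _ _) (bit_lt_two _ _)]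
    simp only [Bool.cond_true]
    ring
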